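/- arXiv:1111.4184 — 2 statements merged into one kernel-verified Lean document; each statement's English description precedes it below -/
import Mathlib

section
/- The center of the braid group Br₃ is the infinite cyclic subgroup generated by u = (σ₁σ₂)³, and u has infinite order. -/
/-- The braid relation σ₁σ₂σ₁ = σ₂σ₁σ₂ as a relator in the free group on two generators. -/
def braidRels : Set (FreeGroup (Fin 2)) :=
  {FreeGroup.of 0 * FreeGroup.of 1 * FreeGroup.of 0 *
    (FreeGroup.of 1 * FreeGroup.of 0 * FreeGroup.of 1)⁻¹}

/-- The braid group on three strands, presented as ⟨σ₁, σ₂ | σ₁σ₂σ₁ = σ₂σ₁σ₂⟩. -/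
abbrev Br3 : Type := PresentedGroup braidRels

/-- The first standard generator σ₁ of Br₃. -/
def σ₁ : Br3 := PresentedGroup.of 0

/-- The second standard generator σ₂ of Br₃. -/
def σ₂ : Br3 := PresentedGroup.of 1

namespace Stmt7

open Monoid Monoid.CoprodI

/-! ### The free product C₂ * C₃ -/

abbrev Gf : Bool → Type := fun b => Multiplicative (ZMod (cond b 3 2))

abbrev K : Type := Monoid.CoprodI Gf

instance : Fintype (Gf false) := inferInstanceAs (Fintype (Multiplicative (ZMod 2)))
instance : Fintype (Gf true) := inferInstanceAs (Fintype (Multiplicative (ZMod 3)))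
instance : DecidableEq (Gf false) := inferInstanceAs (DecidableEq (Multiplicative (ZMod 2)))
instance : DecidableEq (Gf true) := inferInstanceAs (DecidableEq (Multiplicative (ZMod 3)))

def ga : K := Monoid.CoprodI.of (M := Gf) (i := false) (Multiplicative.ofAdd (1 : ZMod 2))
def gb : K := Monoid.CoprodI.of (M := Gf) (i := true) (Multiplicative.ofAdd (1 : ZMod 3))

lemma ga_sq : ga * ga = 1 := by
  have h : ∀ x : Gf false, x * x = 1 := by decide
  rw [ga, ← map_mul, h, map_one]

lemma gb_cube : gb * (gb * gb) = 1 := by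
  have h : ∀ x : Gf true, x * (x * x) = 1 := by decide
  rw [gb, ← map_mul, ← map_mul, h, map_one]

/-! ### Trivial center of C₂ * C₃ -/

lemma word_prod_injective : Function.Injective (Word.prod : Word Gf → K) :=
  Word.equiv.symm.injective

lemma case_true (z : K) (hz : ∀ g : K, g * z = z * g) {j : Bool}
    (w : NeWord Gf true j) (hj : j ≠ true) (hwz : w.prod = z) : False := by
  obtain ⟨g, hg1, hgh⟩ : ∃ g : Gf true, g ≠ 1 ∧ g⁻¹ * w.head ≠ 1 := by
    have h3 : ∀ x : Gf true, ∃ g : Gf true, g ≠ 1 ∧ g⁻¹ * x ≠ 1 := by decide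
    exact h3 w.head
  let w3 : NeWord Gf true true :=
    NeWord.append (w.mulHead g⁻¹ hgh) hj (NeWord.singleton g hg1)
  have h3 : w3.prod = z := by
    rw [show w3.prod = (w.mulHead g⁻¹ hgh).prod * (NeWord.singleton g hg1).prod from
      NeWord.append_prod, NeWord.mulHead_prod, NeWord.prod_singleton, hwz, map_inv,
      mul_assoc, ← hz (Monoid.CoprodI.of g), inv_mul_cancel_left]
  have htw : w3.toWord = w.toWord := word_prod_injective (by
    show w3.prod = w.prod
    rw [h3, hwz])
  have h1 := w3.toList_getLast?
  have h2 := w.toList_getLast?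
  have htl : w3.toList = w.toList := congrArg Word.toList htw
  rw [htl, h2] at h1
  have : j = true := congrArg Sigma.fst (Option.some_injective _ h1)
  exact hj this

lemma case_loop (z : K) (hz : ∀ g : K, g * z = z * g) {i : Bool}
    (w : NeWord Gf i i) (hwz : w.prod = z) : False := by
  have hk : i ≠ !i := by cases i <;> decide
  obtain ⟨g, hg⟩ : ∃ g : Gf (!i), g ≠ 1 := by
    cases i
    · show ∃ g : Gf true, g ≠ 1
      decide
    · show ∃ g : Gf false, g ≠ 1
      decide
  let w₁ : NeWord Gf i (!i) := NeWord.append w hk (NeWord.singleton g hg)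
  let w₂ : NeWord Gf (!i) i := NeWord.append (NeWord.singleton g hg) hk.symm w
  have hp : w₁.prod = w₂.prod := by
    rw [show w₁.prod = w.prod * (NeWord.singleton g hg).prod from NeWord.append_prod,
      show w₂.prod = (NeWord.singleton g hg).prod * w.prod from NeWord.append_prod,
      NeWord.prod_singleton, hwz, hz (Monoid.CoprodI.of g)]
  have htw : w₁.toWord = w₂.toWord := word_prod_injective hp
  have h1 := w₁.toList_head?
  have h2 := w₂.toList_head?
  have htl : w₁.toList = w₂.toList := congrArg Word.toList htw
  rw [htl, h2] at h1
  have : (!i) = i := congrArg Sigma.fst (Option.some_injective _ h1)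
  exact hk this.symm

theorem center_K_eq_bot : Subgroup.center K = ⊥ := by
  rw [eq_bot_iff]
  intro z hz
  rw [Subgroup.mem_bot]
  by_contra hz1
  rw [Subgroup.mem_center_iff] at hz
  have hw : (Word.equiv z) ≠ Word.empty := by
    intro h
    apply hz1
    have h' := congrArg Word.prod h
    rw [Word.prod_empty] at h'
    rw [show Word.prod (Word.equiv z) = z from Word.equiv.symm_apply_apply z] at h'
    exact h'
  obtain ⟨i, j, w, hw'⟩ := NeWord.of_word _ hw
  have hwz : w.prod = z := by
    rw [NeWord.prod, hw']
    exact Word.equiv.symm_apply_apply z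
  by_cases hij : i = j
  · subst hij
    exact case_loop z hz w hwz
  · cases hi : i
    · -- i = false, so j = true; use the inverse word
      subst hi
      have hj : j = true := by cases j with
        | false => exact absurd rfl hij
        | true => rfl
      subst hj
      have hz' : ∀ g : K, g * z⁻¹ = z⁻¹ * g := fun g =>
        Commute.inv_right (a := g) (b := z) (hz g)
      exact case_true z⁻¹ hz' w.inv (by decide) (by rw [NeWord.inv_prod, hwz])
    · subst hi
      exact case_true z hz w (fun h => hij h.symm) hwz

/-! ### The map ψ : Br₃ → K -/

def fgen : Fin 2 → K := ![gb⁻¹ * ga, ga⁻¹ * (gb * gb)]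

lemma fgen_rel : ∀ r ∈ braidRels, FreeGroup.lift fgen r = 1 := by
  intro r hr
  rw [braidRels, Set.mem_singleton_iff] at hr
  subst hr
  simp only [map_mul, map_inv, FreeGroup.lift_apply_of, fgen]
  simp only [Matrix.cons_val_zero, Matrix.cons_val_one, Matrix.head_cons]
  have e1 : (gb⁻¹ * ga) * (ga⁻¹ * (gb * gb)) * (gb⁻¹ * ga) = ga := by group
  have e2 : (ga⁻¹ * (gb * gb)) * (gb⁻¹ * ga) * (ga⁻¹ * (gb * gb)) = ga⁻¹ * (gb * (gb * gb)) := by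
    group
  rw [e1, e2, gb_cube, mul_one, inv_inv]
  exact ga_sq

def ψ : Br3 →* K := PresentedGroup.toGroup fgen_rel

lemma ψ_σ₁ : ψ σ₁ = gb⁻¹ * ga := by
  rw [σ₁, ψ, PresentedGroup.toGroup.of]
  rfl

lemma ψ_σ₂ : ψ σ₂ = ga⁻¹ * (gb * gb) := by
  rw [σ₂, ψ, PresentedGroup.toGroup.of]
  rfl

lemma gb_mem_range : gb ∈ ψ.range := by
  refine ⟨σ₁ * σ₂, ?_⟩
  rw [map_mul, ψ_σ₁, ψ_σ₂]
  group

lemma ga_mem_range : ga ∈ ψ.range := by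
  refine ⟨σ₁ * σ₂ * σ₁, ?_⟩
  rw [map_mul, map_mul, ψ_σ₁, ψ_σ₂]
  group

lemma ψ_surj : Function.Surjective ψ := by
  intro k
  show k ∈ ψ.range
  induction k using Monoid.CoprodI.induction_on with
  | one => exact one_mem _
  | of i m =>
    cases i
    · have h2 : ∀ x : Multiplicative (ZMod 2), x = 1 ∨ x = Multiplicative.ofAdd 1 := by decide
      rcases h2 m with rfl | rfl
      · rw [map_one]; exact one_mem _
      · exact ga_mem_range
    · have h3 : ∀ x : Multiplicative (ZMod 3), x = 1 ∨ x = Multiplicative.ofAdd 1 ∨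
          x = Multiplicative.ofAdd 1 * Multiplicative.ofAdd 1 := by decide
      rcases h3 m with rfl | rfl | rfl
      · rw [map_one]; exact one_mem _
      · exact gb_mem_range
      · rw [map_mul]; exact mul_mem gb_mem_range gb_mem_range
  | mul x y hx hy => exact mul_mem hx hy

/-! ### Basic braid identities -/

lemma braid : σ₁ * σ₂ * σ₁ = σ₂ * σ₁ * σ₂ := by
  have hmem : (FreeGroup.of (0 : Fin 2) * FreeGroup.of 1 * FreeGroup.of 0 *
      (FreeGroup.of 1 * FreeGroup.of 0 * FreeGroup.of 1)⁻¹) ∈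
      Subgroup.normalClosure braidRels :=
    Subgroup.subset_normalClosure rfl
  have h : PresentedGroup.mk braidRels (FreeGroup.of 0 * FreeGroup.of 1 * FreeGroup.of 0 *
      (FreeGroup.of 1 * FreeGroup.of 0 * FreeGroup.of 1)⁻¹) = 1 :=
    (QuotientGroup.eq_one_iff _).mpr hmem
  rw [map_mul, map_inv, map_mul, map_mul, map_mul, map_mul] at h
  exact mul_inv_eq_one.mp h

noncomputable abbrev Δ : Br3 := σ₁ * σ₂ * σ₁

lemma u_eq_ΔΔ : (σ₁ * σ₂) ^ 3 = Δ * Δ := by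
  rw [show (σ₁ * σ₂) ^ 3 = (σ₁ * σ₂ * σ₁) * (σ₂ * σ₁ * σ₂) by
    rw [pow_succ, pow_succ, pow_one]; group, ← braid]

lemma c1 : Δ * σ₁ = σ₂ * Δ := by
  rw [show σ₂ * Δ = (σ₂ * σ₁ * σ₂) * σ₁ by group, ← braid]

lemma c2 : Δ * σ₂ = σ₁ * Δ := by
  rw [show Δ * σ₂ = σ₁ * (σ₂ * σ₁ * σ₂) by group, ← braid]

lemma u_comm_σ₁ : (σ₁ * σ₂) ^ 3 * σ₁ = σ₁ * (σ₁ * σ₂) ^ 3 := by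
  rw [u_eq_ΔΔ, mul_assoc, c1, ← mul_assoc, c2, mul_assoc]

lemma u_comm_σ₂ : (σ₁ * σ₂) ^ 3 * σ₂ = σ₂ * (σ₁ * σ₂) ^ 3 := by
  rw [u_eq_ΔΔ, mul_assoc, c2, ← mul_assoc, c1, mul_assoc]

lemma u_central : (σ₁ * σ₂) ^ 3 ∈ Subgroup.center Br3 := by
  rw [Subgroup.mem_center_iff]
  intro g
  have hg : g ∈ Subgroup.centralizer {(σ₁ * σ₂) ^ 3} := by
    refine PresentedGroup.generated_by braidRels _ (fun j => ?_) g
    rw [Subgroup.mem_centralizer_iff]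
    rintro h ⟨rfl⟩
    fin_cases j
    · exact u_comm_σ₁
    · exact u_comm_σ₂
  rw [Subgroup.mem_centralizer_iff] at hg
  exact (hg _ rfl).symm

/-! ### The quotient Br₃ / ⟨u⟩ and the section φ : K → Q -/

instance u_zpowers_normal : (Subgroup.zpowers ((σ₁ * σ₂) ^ 3)).Normal := by
  constructor
  intro x hx g
  obtain ⟨k, rfl⟩ := hx
  have hc : ((σ₁ * σ₂) ^ 3) ^ k ∈ Subgroup.center Br3 := Subgroup.zpow_mem _ u_central k
  rw [Subgroup.mem_center_iff] at hc
  show g * ((σ₁ * σ₂) ^ 3) ^ k * g⁻¹ ∈ Subgroup.zpowers ((σ₁ * σ₂) ^ 3)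
  have he : g * ((σ₁ * σ₂) ^ 3) ^ k * g⁻¹ = ((σ₁ * σ₂) ^ 3) ^ k := by
    rw [hc g, mul_assoc, mul_inv_cancel, mul_one]
  rw [he]
  exact Subgroup.mem_zpowers_iff.mpr ⟨k, rfl⟩

abbrev πu : Br3 →* Br3 ⧸ Subgroup.zpowers ((σ₁ * σ₂) ^ 3) :=
  QuotientGroup.mk' (Subgroup.zpowers ((σ₁ * σ₂) ^ 3))

lemma πu_u : πu ((σ₁ * σ₂) ^ 3) = 1 :=
  (QuotientGroup.eq_one_iff _).mpr (Subgroup.mem_zpowers _)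

/-- A hom out of `Multiplicative (ZMod n)` from an element whose `n`-th power is one. -/
def powHom (n : ℕ) [NeZero n] {Q : Type*} [Group Q] (q : Q) (h : q ^ (n : ℕ) = 1) :
    Multiplicative (ZMod n) →* Q :=
  AddMonoidHom.toMultiplicativeLeft
    (ZMod.lift n ⟨zmultiplesHom (Additive Q) (Additive.ofMul q), by
      rw [zmultiplesHom_apply, ← ofMul_zpow, zpow_natCast, h, ofMul_one]⟩)

lemma powHom_apply_one (n : ℕ) [NeZero n] {Q : Type*} [Group Q] (q : Q) (h : q ^ (n : ℕ) = 1) :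
    powHom n q h (Multiplicative.ofAdd (1 : ZMod n)) = q := by
  have h1 : (1 : ZMod n) = ((1 : ℤ) : ZMod n) := by rw [Int.cast_one]
  rw [powHom, AddMonoidHom.coe_toMultiplicativeLeft]
  simp only [Function.comp_apply, toAdd_ofAdd]
  rw [h1, ZMod.lift_coe]
  simp

lemma hΔ2 : (πu Δ) ^ (2 : ℕ) = 1 := by
  rw [← map_pow, pow_two, ← u_eq_ΔΔ, πu_u]

lemma hb3 : (πu (σ₁ * σ₂)) ^ (3 : ℕ) = 1 := by
  rw [← map_pow, πu_u]

noncomputable def φ : K →* Br3 ⧸ Subgroup.zpowers ((σ₁ * σ₂) ^ 3) :=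
  Monoid.CoprodI.lift (fun b =>
    Bool.rec (motive := fun b => Gf b →* Br3 ⧸ Subgroup.zpowers ((σ₁ * σ₂) ^ 3))
      (powHom 2 (πu Δ) hΔ2) (powHom 3 (πu (σ₁ * σ₂)) hb3) b)

lemma φ_ga : φ ga = πu Δ := by
  rw [ga, φ, Monoid.CoprodI.lift_of]
  exact powHom_apply_one 2 (πu Δ) hΔ2

lemma φ_gb : φ gb = πu (σ₁ * σ₂) := by
  rw [gb, φ, Monoid.CoprodI.lift_of]
  exact powHom_apply_one 3 (πu (σ₁ * σ₂)) hb3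

lemma φψ_eq : φ.comp ψ = (πu : Br3 →* _) := by
  apply PresentedGroup.ext
  intro x
  fin_cases x
  · show φ (ψ σ₁) = πu σ₁
    rw [ψ_σ₁, map_mul, map_inv, φ_ga, φ_gb, ← map_inv, ← map_mul]
    exact congrArg _ (by group)
  · show φ (ψ σ₂) = πu σ₂
    rw [ψ_σ₂, map_mul, map_mul, map_inv, φ_ga, φ_gb, ← map_inv, ← map_mul, ← map_mul]
    exact congrArg _ (by group)

lemma center_le : Subgroup.center Br3 ≤ Subgroup.zpowers ((σ₁ * σ₂) ^ 3) := by
  intro z hz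
  have hψz : ψ z ∈ Subgroup.center K := by
    rw [Subgroup.mem_center_iff]
    intro k
    obtain ⟨g, rfl⟩ := ψ_surj k
    rw [← map_mul, ← map_mul, Subgroup.mem_center_iff.mp hz g]
  rw [center_K_eq_bot, Subgroup.mem_bot] at hψz
  have hπ : πu z = 1 := by
    calc πu z = φ (ψ z) := by rw [← φψ_eq]; rfl
    _ = 1 := by rw [hψz, map_one]
  exact (QuotientGroup.eq_one_iff z).mp hπ

lemma deg_rel : ∀ r ∈ braidRels,
    FreeGroup.lift (fun _ : Fin 2 => Multiplicative.ofAdd (1 : ℤ)) r = 1 := by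
  intro r hr
  rw [braidRels, Set.mem_singleton_iff] at hr
  subst hr
  simp only [map_mul, map_inv, FreeGroup.lift_apply_of]
  group

noncomputable def deg : Br3 →* Multiplicative ℤ := PresentedGroup.toGroup deg_rel

lemma u_not_finOrder : ¬ IsOfFinOrder ((σ₁ * σ₂) ^ 3) := by
  intro hfin
  have hd : IsOfFinOrder (deg ((σ₁ * σ₂) ^ 3)) := deg.isOfFinOrder hfin
  have hval : deg ((σ₁ * σ₂) ^ 3) = Multiplicative.ofAdd (6 : ℤ) := by
    rw [map_pow, map_mul]
    rw [show deg σ₁ = Multiplicative.ofAdd (1 : ℤ) from PresentedGroup.toGroup.of deg_rel,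
      show deg σ₂ = Multiplicative.ofAdd (1 : ℤ) from PresentedGroup.toGroup.of deg_rel]
    rw [← ofAdd_add, ← ofAdd_nsmul]
    norm_num
  rw [hval] at hd
  obtain ⟨n, hn, h1⟩ := isOfFinOrder_iff_pow_eq_one.mp hd
  rw [← ofAdd_nsmul, ofAdd_eq_one, nsmul_eq_mul] at h1
  omega

end Stmt7

theorem stmt_7 :
    Subgroup.center Br3 = Subgroup.zpowers ((σ₁ * σ₂) ^ 3) ∧
      ¬ IsOfFinOrder ((σ₁ * σ₂) ^ 3) := by
  refine ⟨le_antisymm Stmt7.center_le (Subgroup.zpowers_le.mpr Stmt7.u_central),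
    Stmt7.u_not_finOrder⟩
end

section
/- Let ℓ : Br₃ → ℤ be the word-length homomorphism with ℓ(σ₁) = ℓ(σ₂) = 1, and let q : Br₃ → ℤ/5ℤ be its reduction mod 5. Then q is surjective and its kernel is the subgroup of Br₃ generated by the two elements σ₁·u⁻¹ and σ₂·u⁻¹, where u = (σ₁σ₂)³. In particular this subgroup has index 5 in Br₃. -/
lemma gens_top : Subgroup.closure ({σ₁, σ₂} : Set Br3) = ⊤ := by
  have hr : Set.range (PresentedGroup.of : Fin 2 → Br3) = {σ₁, σ₂} := by
    ext x
    simp only [Set.mem_range, Set.mem_insert_iff, Set.mem_singleton_iff]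
    constructor
    · rintro ⟨i, rfl⟩
      exact Fin.cases (Or.inl rfl) (fun j => Fin.cases (Or.inr rfl) (fun k => k.elim0) j) i
    · rintro (rfl | rfl)
      · exact ⟨0, rfl⟩
      · exact ⟨1, rfl⟩
  rw [← PresentedGroup.closure_range_of braidRels, hr]

lemma braid_rel : σ₁ * σ₂ * σ₁ = σ₂ * σ₁ * σ₂ := by
  have h : (QuotientGroup.mk (FreeGroup.of 0 * FreeGroup.of 1 * FreeGroup.of 0 *
      (FreeGroup.of 1 * FreeGroup.of 0 * FreeGroup.of 1)⁻¹) : Br3) = 1 := by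
    rw [QuotientGroup.eq_one_iff]
    exact Subgroup.subset_normalClosure rfl
  have h2 : σ₁ * σ₂ * σ₁ * (σ₂ * σ₁ * σ₂)⁻¹ = 1 := by
    simpa [σ₁, σ₂, PresentedGroup.of] using PresentedGroup.one_of_mem (rels := braidRels) (Set.mem_singleton _)
  exact mul_inv_eq_one.mp h2

lemma th1 : (σ₁ * σ₂ * σ₁) * σ₁ = σ₂ * (σ₁ * σ₂ * σ₁) := by
  conv_lhs => rw [braid_rel]
  simp only [mul_assoc]

lemma th2 : (σ₁ * σ₂ * σ₁) * σ₂ = σ₁ * (σ₁ * σ₂ * σ₁) := by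
  conv_rhs => rw [braid_rel]
  simp only [mul_assoc]

lemma hu : (σ₁ * σ₂) ^ 3 = (σ₁ * σ₂ * σ₁) * (σ₁ * σ₂ * σ₁) := by
  rw [pow_succ, pow_succ, pow_one]
  nth_rewrite 2 [braid_rel]
  simp only [mul_assoc]

lemma comm1 : Commute σ₁ ((σ₁ * σ₂) ^ 3) := by
  show σ₁ * (σ₁ * σ₂) ^ 3 = (σ₁ * σ₂) ^ 3 * σ₁
  rw [hu, ← mul_assoc σ₁ (σ₁*σ₂*σ₁) (σ₁*σ₂*σ₁), ← th2,
    mul_assoc (σ₁*σ₂*σ₁) σ₂ (σ₁*σ₂*σ₁), ← th1,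
    ← mul_assoc (σ₁*σ₂*σ₁) (σ₁*σ₂*σ₁) σ₁]

lemma comm2 : Commute σ₂ ((σ₁ * σ₂) ^ 3) := by
  show σ₂ * (σ₁ * σ₂) ^ 3 = (σ₁ * σ₂) ^ 3 * σ₂
  rw [hu, ← mul_assoc σ₂ (σ₁*σ₂*σ₁) (σ₁*σ₂*σ₁), ← th1,
    mul_assoc (σ₁*σ₂*σ₁) σ₁ (σ₁*σ₂*σ₁), ← th2,
    ← mul_assoc (σ₁*σ₂*σ₁) (σ₁*σ₂*σ₁) σ₂]

lemma key : ∀ g : Br3, Commute g ((σ₁ * σ₂) ^ 3) := by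
  intro g
  have hg : g ∈ Subgroup.closure ({σ₁, σ₂} : Set Br3) := by
    rw [gens_top]; trivial
  induction hg using Subgroup.closure_induction with
  | mem x hx => rcases hx with rfl | rfl
                · exact comm1
                · exact comm2
  | one => exact Commute.one_left _
  | mul x y _ _ hx hy => exact hx.mul_left hy
  | inv x _ hx => exact hx.inv_left

lemma frel : ∀ r ∈ braidRels,
    FreeGroup.lift (fun _ : Fin 2 => Multiplicative.ofAdd (1 : ZMod 5)) r = 1 := by
  intro r hr
  rcases hr with rfl
  simp only [map_mul, map_inv, FreeGroup.lift_apply_of]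
  decide

noncomputable def q : Br3 →* Multiplicative (ZMod 5) := PresentedGroup.toGroup frel

lemma q1 : q σ₁ = Multiplicative.ofAdd 1 := PresentedGroup.toGroup.of frel
lemma q2 : q σ₂ = Multiplicative.ofAdd 1 := PresentedGroup.toGroup.of frel

lemma pow_ofAdd (n : ℕ) :
    (Multiplicative.ofAdd (1 : ZMod 5)) ^ n = Multiplicative.ofAdd ((n : ZMod 5)) := by
  induction n with
  | zero => simp
  | succ k ih => rw [pow_succ, ih]; push_cast; rw [← ofAdd_add]

lemma zpow_ofAdd (n : ℤ) :
    (Multiplicative.ofAdd (1 : ZMod 5)) ^ n = Multiplicative.ofAdd ((n : ZMod 5)) := by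
  cases n with
  | ofNat k => simpa using pow_ofAdd k
  | negSucc k =>
      rw [zpow_negSucc, pow_ofAdd, ← ofAdd_neg]
      congr 1

lemma q_surj : Function.Surjective q := by
  intro x
  refine ⟨σ₁ ^ (Multiplicative.toAdd x).val, ?_⟩
  rw [map_pow, q1, pow_ofAdd, ZMod.natCast_val, ZMod.cast_id]
  rfl

lemma qU : q ((σ₁ * σ₂) ^ 3) = Multiplicative.ofAdd 1 := by
  rw [map_pow, map_mul, q1, q2]; decide

lemma H_le_ker :
    Subgroup.closure {σ₁ * ((σ₁ * σ₂) ^ 3)⁻¹, σ₂ * ((σ₁ * σ₂) ^ 3)⁻¹} ≤ q.ker := by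
  rw [Subgroup.closure_le]
  rintro x (rfl | rfl) <;>
    simp only [SetLike.mem_coe, MonoidHom.mem_ker, map_mul, map_inv, qU, q1, q2] <;> decide

lemma struct (g : Br3) :
    ∃ h ∈ Subgroup.closure {σ₁ * ((σ₁ * σ₂) ^ 3)⁻¹, σ₂ * ((σ₁ * σ₂) ^ 3)⁻¹},
      ∃ n : ℤ, g = h * ((σ₁ * σ₂) ^ 3) ^ n := by
  have hg : g ∈ Subgroup.closure ({σ₁, σ₂} : Set Br3) := by rw [gens_top]; trivial
  induction hg using Subgroup.closure_induction with
  | mem x hx =>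
      rcases hx with rfl | rfl
      · exact ⟨σ₁ * ((σ₁ * σ₂) ^ 3)⁻¹, Subgroup.subset_closure (Or.inl rfl), 1, by group⟩
      · exact ⟨σ₂ * ((σ₁ * σ₂) ^ 3)⁻¹, Subgroup.subset_closure (Or.inr rfl), 1, by group⟩
  | one => exact ⟨1, one_mem _, 0, by simp⟩
  | mul x y _ _ hx hy =>
      obtain ⟨h1, hh1, n, rfl⟩ := hx
      obtain ⟨h2, hh2, m, rfl⟩ := hy
      refine ⟨h1 * h2, mul_mem hh1 hh2, n + m, ?_⟩
      rw [zpow_add, mul_assoc h1 (((σ₁ * σ₂) ^ 3) ^ n) (h2 * ((σ₁ * σ₂) ^ 3) ^ m),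
        ← mul_assoc (((σ₁ * σ₂) ^ 3) ^ n) h2 (((σ₁ * σ₂) ^ 3) ^ m),
        ← ((key h2).zpow_right n).eq,
        mul_assoc h2 (((σ₁ * σ₂) ^ 3) ^ n) (((σ₁ * σ₂) ^ 3) ^ m),
        ← mul_assoc h1 h2 (((σ₁ * σ₂) ^ 3) ^ n * ((σ₁ * σ₂) ^ 3) ^ m)]
  | inv x _ hx =>
      obtain ⟨h, hh, n, rfl⟩ := hx
      refine ⟨h⁻¹, inv_mem hh, -n, ?_⟩
      rw [mul_inv_rev, ← zpow_neg]
      exact (((key h⁻¹).zpow_right (-n)).eq).symm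

lemma hab : (σ₁ * ((σ₁ * σ₂) ^ 3)⁻¹) * (σ₂ * ((σ₁ * σ₂) ^ 3)⁻¹) =
    (σ₁ * σ₂) * (((σ₁ * σ₂) ^ 3)⁻¹ * ((σ₁ * σ₂) ^ 3)⁻¹) := by
  have c : σ₂ * ((σ₁ * σ₂) ^ 3)⁻¹ = ((σ₁ * σ₂) ^ 3)⁻¹ * σ₂ := ((key σ₂).inv_right).eq
  rw [mul_assoc σ₁ ((σ₁ * σ₂) ^ 3)⁻¹ (σ₂ * ((σ₁ * σ₂) ^ 3)⁻¹),
    ← mul_assoc ((σ₁ * σ₂) ^ 3)⁻¹ σ₂ ((σ₁ * σ₂) ^ 3)⁻¹, ← c,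
    mul_assoc σ₂ ((σ₁ * σ₂) ^ 3)⁻¹ ((σ₁ * σ₂) ^ 3)⁻¹,
    ← mul_assoc σ₁ σ₂ (((σ₁ * σ₂) ^ 3)⁻¹ * ((σ₁ * σ₂) ^ 3)⁻¹)]

lemma u5 : ((σ₁ * σ₂) ^ 3) ^ 5 =
    (((σ₁ * ((σ₁ * σ₂) ^ 3)⁻¹) * (σ₂ * ((σ₁ * σ₂) ^ 3)⁻¹)) ^ 3)⁻¹ := by
  have c2 : Commute (σ₁ * σ₂) (((σ₁ * σ₂) ^ 3)⁻¹ * ((σ₁ * σ₂) ^ 3)⁻¹) :=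
    ((key (σ₁ * σ₂)).inv_right).mul_right ((key (σ₁ * σ₂)).inv_right)
  rw [hab, c2.mul_pow]
  group

lemma ker_le_H : q.ker ≤
    Subgroup.closure {σ₁ * ((σ₁ * σ₂) ^ 3)⁻¹, σ₂ * ((σ₁ * σ₂) ^ 3)⁻¹} := by
  intro g hg
  obtain ⟨h, hh, n, rfl⟩ := struct g
  have hqh : q h = 1 := H_le_ker hh
  have hq : q (h * ((σ₁ * σ₂) ^ 3) ^ n) = 1 := hg
  rw [map_mul, hqh, one_mul, map_zpow, qU, zpow_ofAdd] at hq
  have h0 : ((n : ZMod 5)) = 0 := by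
    have := congrArg Multiplicative.toAdd hq
    simpa using this
  have hdvd : (5 : ℤ) ∣ n := by
    exact_mod_cast (ZMod.intCast_zmod_eq_zero_iff_dvd n 5).mp h0
  obtain ⟨k, rfl⟩ := hdvd
  refine mul_mem hh ?_
  rw [zpow_mul]
  refine Subgroup.zpow_mem _ ?_ k
  have h5 : ((σ₁ * σ₂) ^ 3) ^ (5 : ℤ) = ((σ₁ * σ₂) ^ 3) ^ (5 : ℕ) := by
    norm_cast
  rw [h5, u5]
  apply inv_mem
  apply pow_mem
  apply mul_mem
  · exact Subgroup.subset_closure (Or.inl rfl)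
  · exact Subgroup.subset_closure (Or.inr rfl)

theorem stmt_12 :
    ∃ q : Br3 →* Multiplicative (ZMod 5),
      q σ₁ = Multiplicative.ofAdd 1 ∧ q σ₂ = Multiplicative.ofAdd 1 ∧
      Function.Surjective q ∧
      q.ker = Subgroup.closure {σ₁ * ((σ₁ * σ₂) ^ 3)⁻¹, σ₂ * ((σ₁ * σ₂) ^ 3)⁻¹} ∧
      (Subgroup.closure {σ₁ * ((σ₁ * σ₂) ^ 3)⁻¹, σ₂ * ((σ₁ * σ₂) ^ 3)⁻¹} : Subgroup Br3).index = 5 := by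
  have hker : q.ker = Subgroup.closure {σ₁ * ((σ₁ * σ₂) ^ 3)⁻¹, σ₂ * ((σ₁ * σ₂) ^ 3)⁻¹} :=
    le_antisymm ker_le_H H_le_ker
  refine ⟨q, q1, q2, q_surj, hker, ?_⟩
  rw [← hker, Subgroup.index_ker, MonoidHom.range_eq_top_of_surjective q q_surj,
    Subgroup.card_top]
  rw [Nat.card_eq_fintype_card]
  rfl
end
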